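/- Let S be a submodule of a free 𝔽[x]-module of rank r with free basis K = {e_1, …, e_r}, and suppose B = {b_1, …, b_r} is a Gröbner basis of S such that LM(b_j) = x^{d_j} e_j for each j. Then dim_𝔽(M/S) = d_1 + d_2 + ⋯ + d_r. -/

import Mathlib

/-- The monomial support of an element of the free module `𝔽[x]^r`. -/
def msupp {𝔽 : Type*} [Field 𝔽] {r : ℕ} (f : Fin r → Polynomial 𝔽) : Set (ℕ × Fin r) :=
  {m | (f m.2).coeff m.1 ≠ 0}

/-- `m` is the leading monomial of `f` with respect to the monomial order `le`. -/
def IsLM {𝔽 : Type*} [Field 𝔽] {r : ℕ} (le : ℕ × Fin r → ℕ × Fin r → Prop)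
    (f : Fin r → Polynomial 𝔽) (m : ℕ × Fin r) : Prop :=
  m ∈ msupp f ∧ ∀ m' ∈ msupp f, le m' m

/-- Any nonempty finite set with a total transitive relation has a maximum. -/
lemma groebner_aux_finset_max {α : Type*} (le : α → α → Prop)
    (htot : ∀ a b, le a b ∨ le b a) (htrans : ∀ a b c, le a b → le b c → le a c)
    : ∀ (t : Finset α), t.Nonempty → ∃ m ∈ t, ∀ x ∈ t, le x m := by
  classical
  intro t
  induction t using Finset.cons_induction with
  | empty => intro h; simp at h
  | cons a s ha ih =>
    intro _
    rcases s.eq_empty_or_nonempty with rfl | hs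
    · refine ⟨a, by simp, ?_⟩
      intro x hx
      simp only [Finset.cons_empty, Finset.mem_singleton] at hx
      subst hx
      rcases htot x x with h | h <;> exact h
    · obtain ⟨m, hm, hmax⟩ := ih hs
      rcases htot a m with h | h
      · refine ⟨m, Finset.mem_cons_of_mem hm, ?_⟩
        intro x hx
        rcases Finset.mem_cons.1 hx with rfl | hx
        · exact h
        · exact hmax x hx
      · refine ⟨a, Finset.mem_cons_self a s, ?_⟩
        intro x hx
        rcases Finset.mem_cons.1 hx with rfl | hx
        · rcases htot x x with h' | h' <;> exact h'
        · exact htrans x m a (hmax x hx) h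

lemma groebner_aux_set_max {α : Type*} (le : α → α → Prop)
    (htot : ∀ a b, le a b ∨ le b a) (htrans : ∀ a b c, le a b → le b c → le a c)
    {s : Set α} (hfin : s.Finite) (hne : s.Nonempty) : ∃ m ∈ s, ∀ x ∈ s, le x m := by
  classical
  obtain ⟨m, hm, hmax⟩ := groebner_aux_finset_max le htot htrans hfin.toFinset
    (by simpa using hne)
  exact ⟨m, hfin.mem_toFinset.1 hm, fun x hx => hmax x (hfin.mem_toFinset.2 hx)⟩

lemma groebner_aux_msupp_finite {𝔽 : Type*} [Field 𝔽] {r : ℕ} (f : Fin r → Polynomial 𝔽) :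
    (msupp f).Finite := by
  apply Set.Finite.subset
    (Set.finite_iUnion (fun j : Fin r => ((f j).support.finite_toSet.image (fun k => (k, j)))))
  rintro ⟨k, j⟩ hk
  exact Set.mem_iUnion.2 ⟨j, ⟨k, by simpa [msupp] using hk, rfl⟩⟩

theorem groebner_footprint_dimension
    {𝔽 : Type*} [Field 𝔽] {r : ℕ}
    (le : ℕ × Fin r → ℕ × Fin r → Prop)
    (hrefl : ∀ m, le m m)
    (htot : ∀ m m', le m m' ∨ le m' m)
    (htrans : ∀ a b c, le a b → le b c → le a c)
    (hanti : ∀ a b, le a b → le b a → a = b)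
    (hcompat : ∀ (k k' : ℕ) (j j' : Fin r), le (k, j) (k', j') → le (k + 1, j) (k' + 1, j'))
    (hxgt : ∀ (k : ℕ) (j : Fin r), le (k, j) (k + 1, j))
    (hwf : WellFounded (fun a b => le a b ∧ a ≠ b))
    (S : Submodule (Polynomial 𝔽) (Fin r → Polynomial 𝔽))
    (b : Fin r → (Fin r → Polynomial 𝔽)) (d : Fin r → ℕ)
    (hbS : ∀ j, b j ∈ S)
    (hlm : ∀ j, IsLM le (b j) (d j, j))
    (hGB : ∀ f ∈ S, f ≠ 0 → ∀ m, IsLM le f m → ∃ j, m.2 = j ∧ d j ≤ m.1) :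
    Module.finrank 𝔽 ((Fin r → Polynomial 𝔽) ⧸ S.restrictScalars 𝔽) = ∑ j, d j := by
  classical
  -- iterated compatibility
  have hcompatN : ∀ (s k k' : ℕ) (j j' : Fin r),
      le (k, j) (k', j') → le (k + s, j) (k' + s, j') := by
    intro s
    induction s with
    | zero => intro k k' j j' h; exact h
    | succ n ih =>
      intro k k' j j' h
      exact hcompat (k + n) (k' + n) j j' (ih k k' j j' h)
  set Δ : Set (ℕ × Fin r) := {m | m.1 < d m.2} with hΔ
  set π := (S.restrictScalars 𝔽).mkQ with hπdef
  set mon : (Σ j : Fin r, Fin (d j)) → (Fin r → Polynomial 𝔽) :=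
    fun t => Pi.single t.1 (Polynomial.X ^ (t.2 : ℕ)) with hmon
  set v : (Σ j : Fin r, Fin (d j)) → ((Fin r → Polynomial 𝔽) ⧸ S.restrictScalars 𝔽) :=
    fun t => π (mon t) with hv
  -- base case: elements supported in the staircase
  have base : ∀ f : Fin r → Polynomial 𝔽, msupp f ⊆ Δ →
      π f ∈ Submodule.span 𝔽 (Set.range v) := by
    intro f hf
    have hmem : f ∈ Submodule.span 𝔽 (Set.range mon) := by
      have hf_eq : f = ∑ j : Fin r, ∑ k ∈ (f j).support,
          (f j).coeff k • (Pi.single j (Polynomial.X ^ k) : Fin r → Polynomial 𝔽) := by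
        funext j'
        rw [Finset.sum_apply]
        rw [Finset.sum_eq_single j']
        · rw [Finset.sum_apply]
          have hterm : ∀ k ∈ (f j').support,
              ((f j').coeff k • (Pi.single j' (Polynomial.X ^ k) : Fin r → Polynomial 𝔽)) j'
                = Polynomial.monomial k ((f j').coeff k) := by
            intro k _
            rw [Pi.smul_apply, Pi.single_eq_same, Polynomial.smul_X_eq_monomial]
          rw [Finset.sum_congr rfl hterm]
          exact Polynomial.as_sum_support (f j')
        · intro j _ hne
          rw [Finset.sum_apply]
          apply Finset.sum_eq_zero
          intro k _
          simp [Pi.single_apply, Ne.symm hne]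
        · intro h; exact absurd (Finset.mem_univ j') h
      rw [hf_eq]
      apply Submodule.sum_mem
      intro j _
      apply Submodule.sum_mem
      intro k hk
      have hkd : k < d j := by
        have hmem : ((k, j) : ℕ × Fin r) ∈ msupp f := by
          simp only [msupp, Set.mem_setOf_eq]
          exact Polynomial.mem_support_iff.1 hk
        exact hf hmem
      exact Submodule.smul_mem _ _ (Submodule.subset_span ⟨⟨j, ⟨k, hkd⟩⟩, rfl⟩)
    have : π f ∈ Submodule.map π (Submodule.span 𝔽 (Set.range mon)) :=
      Submodule.mem_map_of_mem hmem
    rwa [Submodule.map_span, ← Set.range_comp] at this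
  -- one-step reduction at a monomial outside the staircase
  have hred : ∀ (f : Fin r → Polynomial 𝔽) (m₀ : ℕ × Fin r), m₀ ∈ msupp f → d m₀.2 ≤ m₀.1 →
      ∃ g : Fin r → Polynomial 𝔽, π g = π f ∧
        ∀ m' ∈ msupp g, m' ≠ m₀ ∧ (m' ∈ msupp f ∨ le m' m₀) := by
    rintro f ⟨k, j⟩ hm₀ hd
    simp only at hd
    set s := k - d j with hs
    have hks : d j + s = k := by omega
    set L := (b j j).coeff (d j) with hL
    have hL0 : L ≠ 0 := (hlm j).1
    set c := (f j).coeff k / L with hc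
    set g := f - (Polynomial.C c * Polynomial.X ^ s) • b j with hg
    have hcoeff : ∀ (k' : ℕ) (j' : Fin r),
        (g j').coeff k' = (f j').coeff k' -
          c * (if s ≤ k' then (b j j').coeff (k' - s) else 0) := by
      intro k' j'
      have : (g j') = f j' - (Polynomial.C c * Polynomial.X ^ s) * b j j' := by
        simp [hg, Pi.sub_apply, Pi.smul_apply, smul_eq_mul]
      rw [this, Polynomial.coeff_sub]
      congr 1
      have h2 : (Polynomial.C c * Polynomial.X ^ s) * b j j'
          = Polynomial.C c * (b j j' * Polynomial.X ^ s) := by ring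
      rw [h2, Polynomial.coeff_C_mul, Polynomial.coeff_mul_X_pow']
    refine ⟨g, ?_, ?_⟩
    · have hS : (Polynomial.C c * Polynomial.X ^ s) • b j ∈ S.restrictScalars 𝔽 :=
        Submodule.smul_mem S _ (hbS j)
      have : π ((Polynomial.C c * Polynomial.X ^ s) • b j) = 0 := by
        rw [hπdef, Submodule.mkQ_apply, Submodule.Quotient.mk_eq_zero]
        exact hS
      rw [hg, map_sub, this, sub_zero]
    · rintro ⟨k', j'⟩ hm'
      have hg0 : ((k, j) : ℕ × Fin r) ∉ msupp g := by
        simp only [msupp, Set.mem_setOf_eq, not_not]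
        rw [hcoeff k j]
        have hsk : s ≤ k := by omega
        rw [if_pos hsk]
        have : k - s = d j := by omega
        rw [this, hc, div_mul_cancel₀ _ hL0, sub_self]
      constructor
      · intro heq; exact hg0 (heq ▸ hm')
      · by_cases hmf : ((k', j') : ℕ × Fin r) ∈ msupp f
        · exact Or.inl hmf
        · right
          have h1 : (f j').coeff k' = 0 := by simpa [msupp] using hmf
          have h2 : (g j').coeff k' ≠ 0 := hm'
          rw [hcoeff k' j', h1, zero_sub, neg_ne_zero] at h2
          have hsk' : s ≤ k' := by
            by_contra hlt
            rw [if_neg hlt, mul_zero] at h2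
            exact h2 rfl
          rw [if_pos hsk'] at h2
          have hb : ((k' - s, j') : ℕ × Fin r) ∈ msupp (b j) := by
            simp only [msupp, Set.mem_setOf_eq]
            intro h0
            rw [h0, mul_zero] at h2
            exact h2 rfl
          have := hcompatN s (k' - s) (d j) j' j ((hlm j).2 _ hb)
          rwa [Nat.sub_add_cancel hsk', hks] at this
  -- main induction
  have main : ∀ m : ℕ × Fin r, ∀ f : Fin r → Polynomial 𝔽,
      (∀ m' ∈ msupp f, m' ∉ Δ → le m' m) →
      π f ∈ Submodule.span 𝔽 (Set.range v) := by
    intro m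
    induction m using hwf.induction with
    | _ m IH =>
    -- helper: strict bound case
    have finish : ∀ g : Fin r → Polynomial 𝔽,
        (∀ m' ∈ msupp g, m' ∉ Δ → le m' m ∧ m' ≠ m) →
        π g ∈ Submodule.span 𝔽 (Set.range v) := by
      intro g hgbd
      by_cases hsub : msupp g ⊆ Δ
      · exact base g hsub
      · have hbadne : (msupp g \ Δ).Nonempty := by
          rw [Set.not_subset] at hsub
          obtain ⟨x, hx, hx'⟩ := hsub
          exact ⟨x, hx, hx'⟩
        obtain ⟨m₁, hm₁, hmax₁⟩ := groebner_aux_set_max le htot htrans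
          ((groebner_aux_msupp_finite g).subset Set.diff_subset) hbadne
        have hm₁lt : le m₁ m ∧ m₁ ≠ m := hgbd m₁ hm₁.1 hm₁.2
        exact IH m₁ hm₁lt g (fun m' hm' hm'' => hmax₁ m' ⟨hm', hm''⟩)
    intro f hbd
    by_cases hsub : msupp f ⊆ Δ
    · exact base f hsub
    · have hbadne : (msupp f \ Δ).Nonempty := by
        rw [Set.not_subset] at hsub
        obtain ⟨x, hx, hx'⟩ := hsub
        exact ⟨x, hx, hx'⟩
      obtain ⟨m₀, hm₀, hmax₀⟩ := groebner_aux_set_max le htot htrans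
        ((groebner_aux_msupp_finite f).subset Set.diff_subset) hbadne
      by_cases hm₀m : m₀ = m
      · -- reduce at m₀
        subst hm₀m
        have hd : d m₀.2 ≤ m₀.1 := by
          have := hm₀.2
          simp only [hΔ, Set.mem_setOf_eq, not_lt] at this
          exact this
        obtain ⟨g, hgπ, hgprop⟩ := hred f m₀ hm₀.1 hd
        rw [← hgπ]
        apply finish
        intro m' hm' hm'Δ
        obtain ⟨hne, hcase⟩ := hgprop m' hm'
        refine ⟨?_, hne⟩
        rcases hcase with hmf | hle
        · exact hmax₀ m' ⟨hmf, hm'Δ⟩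
        · exact hle
      · apply finish
        intro m' hm' hm'Δ
        have h1 : le m' m₀ := hmax₀ m' ⟨hm', hm'Δ⟩
        have h2 : le m₀ m := hbd m₀ hm₀.1 hm₀.2
        refine ⟨htrans _ _ _ h1 h2, ?_⟩
        rintro rfl
        exact hm₀m (hanti _ _ h2 h1)
  -- spanning
  have hspan : ⊤ ≤ Submodule.span 𝔽 (Set.range v) := by
    intro x _
    obtain ⟨f, rfl⟩ := Submodule.mkQ_surjective (S.restrictScalars 𝔽) x
    by_cases hsub : msupp f ⊆ Δ
    · exact base f hsub
    · have hbadne : (msupp f \ Δ).Nonempty := by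
        rw [Set.not_subset] at hsub
        obtain ⟨x, hx, hx'⟩ := hsub
        exact ⟨x, hx, hx'⟩
      obtain ⟨m₀, hm₀, hmax₀⟩ := groebner_aux_set_max le htot htrans
        ((groebner_aux_msupp_finite f).subset Set.diff_subset) hbadne
      exact main m₀ f (fun m' hm' hm'' => hmax₀ m' ⟨hm', hm''⟩)
  -- linear independence
  have hli : LinearIndependent 𝔽 v := by
    rw [Fintype.linearIndependent_iff]
    intro g hg
    set f : Fin r → Polynomial 𝔽 := ∑ i, g i • mon i with hfdef
    have hπf : π f = 0 := by
      rw [hfdef, map_sum]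
      simpa using hg
    have hfS : f ∈ S := by
      rw [hπdef, Submodule.mkQ_apply, Submodule.Quotient.mk_eq_zero] at hπf
      exact hπf
    have hcoeff : ∀ (i : Σ j : Fin r, Fin (d j)), (f i.1).coeff (i.2 : ℕ) = g i := by
      rintro ⟨j, k⟩
      rw [hfdef, Finset.sum_apply, Polynomial.finset_sum_coeff]
      rw [Finset.sum_eq_single (⟨j, k⟩ : Σ j : Fin r, Fin (d j))]
      · simp [hmon]
      · rintro ⟨j', k'⟩ _ hne
        by_cases hj : j' = j
        · subst hj
          have hk : (k' : ℕ) ≠ (k : ℕ) := by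
            intro h
            exact hne (by simp [Fin.val_injective h])
          simp [hmon, Polynomial.coeff_X_pow, hk, Ne.symm hk]
        · simp [hmon, Pi.single_apply, Ne.symm hj]
      · intro h; exact absurd (Finset.mem_univ _) h
    have hsupp : msupp f ⊆ Δ := by
      rintro ⟨k, j⟩ hm
      simp only [msupp, Set.mem_setOf_eq] at hm
      by_contra hkd
      simp only [hΔ, Set.mem_setOf_eq, not_lt] at hkd
      apply hm
      rw [hfdef, Finset.sum_apply, Polynomial.finset_sum_coeff]
      apply Finset.sum_eq_zero
      rintro ⟨j', k'⟩ _
      by_cases hj : j' = j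
      · subst hj
        have hk : (k' : ℕ) ≠ k := by
          have := k'.isLt
          omega
        simp [hmon, Polynomial.coeff_X_pow, hk, Ne.symm hk]
      · simp [hmon, Pi.single_apply, Ne.symm hj]
    intro i
    by_contra hi
    have hf0 : f ≠ 0 := by
      intro h
      apply hi
      rw [← hcoeff i, h]
      simp
    have hne : (msupp f).Nonempty := ⟨((i.2 : ℕ), i.1), by
      simp only [msupp, Set.mem_setOf_eq]
      rw [hcoeff i]
      exact hi⟩
    obtain ⟨m, hm, hmax⟩ := groebner_aux_set_max le htot htrans
      (groebner_aux_msupp_finite f) hne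
    obtain ⟨j, hj, hdj⟩ := hGB f hfS hf0 m ⟨hm, hmax⟩
    have h1 := hsupp hm
    simp only [hΔ, Set.mem_setOf_eq] at h1
    rw [hj] at h1
    omega
  -- conclude
  have bas : Module.Basis (Σ j : Fin r, Fin (d j)) 𝔽
      ((Fin r → Polynomial 𝔽) ⧸ S.restrictScalars 𝔽) := Module.Basis.mk hli hspan
  rw [Module.finrank_eq_card_basis bas]
  simp
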